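/- For all integers 1 ≤ ν ≤ μ, the sets F_1^{(ν,μ)} and F_2^{(ν,μ)} are finite, and their cardinalities are Fibonacci numbers; precisely, |F_1^{(ν,μ)}| = Fib(2(μ−ν)+3) and |F_2^{(ν,μ)}| = Fib(2(μ−ν)+2), where Fib is the Fibonacci sequence with Fib(1) = Fib(2) = 1. -/

import Mathlib

/-- The chain conditions defining the Fibonacci tree `F_η^{(ν,μ)}`. -/
def chainCond (η : ℕ) (l : List ℕ) : Prop :=
  if η = 1 then
    ∀ t, 1 ≤ t → (2*t < l.length → l.getD (2*t) 0 < l.getD (2*t-1) 0) ∧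
                 (2*t+1 < l.length → l.getD (2*t+1) 0 ≤ l.getD (2*t) 0)
  else
    ∀ t, 1 ≤ t → (2*t-1 < l.length → l.getD (2*t-1) 0 < l.getD (2*t-2) 0) ∧
                 (2*t < l.length → l.getD (2*t) 0 ≤ l.getD (2*t-1) 0)

/-- The vertex set of the Fibonacci tree `F_η^{(ν,μ)}`: tuples `(m_0, …, m_β)` encoded as
lists, with entries in `[ν,μ]`, `m_0 = μ`, satisfying the chain conditions. -/
def Fset (η ν μ : ℕ) : Set (List ℕ) :=
  { l | l ≠ [] ∧ l.getD 0 0 = μ ∧ (∀ x ∈ l, ν ≤ x ∧ x ≤ μ) ∧ chainCond η l }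

def altChain : Bool → List ℕ → Prop
  | _, [] => True
  | _, [_] => True
  | b, x :: y :: l => (if b then y < x else y ≤ x) ∧ altChain (!b) (y :: l)

def idxCond (b : Bool) (l : List ℕ) : Prop :=
  ∀ t, 1 ≤ t →
    (2*t-1 < l.length →
      (if b then l.getD (2*t-1) 0 < l.getD (2*t-2) 0 else l.getD (2*t-1) 0 ≤ l.getD (2*t-2) 0)) ∧
    (2*t < l.length →
      (if b then l.getD (2*t) 0 ≤ l.getD (2*t-1) 0 else l.getD (2*t) 0 < l.getD (2*t-1) 0))

lemma chainCond_two (l : List ℕ) : chainCond 2 l ↔ idxCond true l := by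
  simp [chainCond, idxCond]

lemma chainCond_one_cons (x : ℕ) (l : List ℕ) : chainCond 1 (x :: l) ↔ idxCond true l := by
  simp only [chainCond, idxCond, if_pos rfl, if_true]
  constructor
  · intro h t ht
    obtain ⟨s, rfl⟩ : ∃ s, t = s + 1 := ⟨t - 1, by omega⟩
    have h' := h (s+1) (by omega)
    simp only [show 2*(s+1) = (2*s+1)+1 from by ring, show 2*(s+1)+1 = (2*s+2)+1 from by ring,
      show 2*(s+1)-1 = (2*s)+1 from by omega, show 2*(s+1)-2 = 2*s from by omega,
      List.getD_cons_succ, List.length_cons] at h' ⊢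
    exact ⟨fun hb => h'.1 (by omega), fun hb => h'.2 (by omega)⟩
  · intro h t ht
    obtain ⟨s, rfl⟩ : ∃ s, t = s + 1 := ⟨t - 1, by omega⟩
    have h' := h (s+1) (by omega)
    simp only [show 2*(s+1) = (2*s+1)+1 from by ring, show 2*(s+1)+1 = (2*s+2)+1 from by ring,
      show 2*(s+1)-1 = (2*s)+1 from by omega, show 2*(s+1)-2 = 2*s from by omega,
      List.getD_cons_succ, List.length_cons] at h' ⊢
    exact ⟨fun hb => h'.1 (by omega), fun hb => h'.2 (by omega)⟩

lemma getD_cons_pred (x : ℕ) (l : List ℕ) (n : ℕ) (hn : 1 ≤ n) :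
    (x :: l).getD n 0 = l.getD (n-1) 0 := by
  obtain ⟨m, rfl⟩ : ∃ m, n = m + 1 := ⟨n-1, by omega⟩
  simp

lemma idxCond_nil (b : Bool) : idxCond b [] := by
  intro t ht
  constructor <;> intro hb <;> simp at hb

lemma idxCond_cons (b : Bool) (x : ℕ) (l : List ℕ) :
    idxCond b (x :: l) ↔
      ((0 < l.length → (if b then l.getD 0 0 < x else l.getD 0 0 ≤ x)) ∧ idxCond (!b) l) := by
  constructor
  · intro h
    refine ⟨fun h0 => ?_, fun s hs => ?_⟩
    · have h' := (h 1 le_rfl).1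
      simpa using h' (by simpa using h0)
    · obtain ⟨u, rfl⟩ : ∃ u, s = u + 1 := ⟨s - 1, by omega⟩
      constructor
      · intro hb
        have h' := (h (u+1) (by omega)).2 (by simp only [List.length_cons]; omega)
        rw [getD_cons_pred x l (2*(u+1)) (by omega), getD_cons_pred x l (2*(u+1)-1) (by omega),
          show (2*(u+1)-1-1 : ℕ) = 2*(u+1)-2 from by omega] at h'
        cases b <;> simpa using h'
      · intro hb
        have h' := (h (u+2) (by omega)).1 (by simp only [List.length_cons]; omega)
        rw [getD_cons_pred x l (2*(u+2)-1) (by omega), getD_cons_pred x l (2*(u+2)-2) (by omega),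
          show (2*(u+2)-1-1 : ℕ) = 2*(u+1) from by omega,
          show (2*(u+2)-2-1 : ℕ) = 2*(u+1)-1 from by omega] at h'
        cases b <;> simpa using h'
  · rintro ⟨h0, h⟩ t ht
    obtain ⟨u, rfl⟩ : ∃ u, t = u + 1 := ⟨t - 1, by omega⟩
    constructor
    · intro hb
      rcases Nat.eq_zero_or_pos u with rfl | hu
      · simpa using h0 (by simp only [List.length_cons] at hb; omega)
      · have h' := (h u (by omega)).2 (by simp only [List.length_cons] at hb; omega)
        rw [getD_cons_pred x l (2*(u+1)-1) (by omega), getD_cons_pred x l (2*(u+1)-2) (by omega),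
          show (2*(u+1)-1-1 : ℕ) = 2*u from by omega,
          show (2*(u+1)-2-1 : ℕ) = 2*u-1 from by omega]
        cases b <;> simpa using h'
    · intro hb
      have h' := (h (u+1) (by omega)).1 (by simp only [List.length_cons] at hb; omega)
      rw [getD_cons_pred x l (2*(u+1)) (by omega), getD_cons_pred x l (2*(u+1)-1) (by omega),
        show (2*(u+1)-1-1 : ℕ) = 2*(u+1)-2 from by omega]
      cases b <;> simpa using h'

lemma idxCond_iff_altChain : ∀ (l : List ℕ) (b : Bool), idxCond b l ↔ altChain b l := by
  intro l
  induction l with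
  | nil => intro b; simp only [altChain, iff_true]; exact idxCond_nil b
  | cons x l ih =>
    intro b
    rw [idxCond_cons, ih (!b)]
    cases l with
    | nil => simp [altChain, idxCond_nil]
    | cons y l' => cases b <;> simp [altChain]

lemma altChain_le : ∀ (b : Bool) (l : List ℕ), altChain b l → ∀ x ∈ l, x ≤ l.headI := by
  intro b l
  induction l generalizing b with
  | nil => intro _ x hx; simp at hx
  | cons a l ih =>
    intro h x hx
    cases l with
    | nil => simp at hx; simp [hx]
    | cons c l' =>
      rw [List.mem_cons] at hx
      rcases hx with rfl | hx
      · simp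
      · have hca : c ≤ a := by
          have := h.1; split at this <;> omega
        have := ih (!b) h.2 x hx
        simp only [List.headI] at this ⊢
        omega

/-- `(PQ ν d).1` : nonempty strict-first alternating chains with entries ≥ ν, head ≤ ν+d.
    `(PQ ν d).2` : same with weak-first chains. -/
def PQ (ν : ℕ) : ℕ → Finset (List ℕ) × Finset (List ℕ)
  | 0 => ({[ν]}, {[ν], [ν, ν]})
  | d+1 =>
    let p := (PQ ν d).1
    let q := (PQ ν d).2
    let k := ν + d + 1
    let p' := p ∪ insert [k] (q.image (k :: ·))
    (p', q ∪ insert [k] (p'.image (k :: ·)))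

def goodC (b : Bool) (ν m : ℕ) (l : List ℕ) : Prop :=
  l ≠ [] ∧ l.headI ≤ m ∧ (∀ x ∈ l, ν ≤ x) ∧ altChain b l

lemma PQ_mem (ν : ℕ) : ∀ d,
    (∀ l, l ∈ (PQ ν d).1 ↔ goodC true ν (ν + d) l) ∧
    (∀ l, l ∈ (PQ ν d).2 ↔ goodC false ν (ν + d) l) := by
  intro d
  induction d with
  | zero =>
    constructor
    · intro l
      simp only [PQ, Finset.mem_singleton, goodC, Nat.add_zero]
      constructor
      · rintro rfl
        refine ⟨by simp, by simp, by simp, by simp [altChain]⟩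
      · rintro ⟨hne, hh, hlo, hc⟩
        cases l with
        | nil => exact absurd rfl hne
        | cons a t =>
          have ha : a = ν := le_antisymm (by simpa using hh) (hlo a (by simp))
          cases t with
          | nil => simp [ha]
          | cons c t' =>
            exfalso
            have h1 : c < a := by simpa using hc.1
            have := hlo c (by simp)
            omega
    · intro l
      simp only [PQ, Finset.mem_insert, Finset.mem_singleton, goodC, Nat.add_zero]
      constructor
      · rintro (rfl | rfl)
        · exact ⟨by simp, by simp, by simp, by simp [altChain]⟩
        · exact ⟨by simp, by simp, by simp, by simp [altChain]⟩
      · rintro ⟨hne, hh, hlo, hc⟩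
        cases l with
        | nil => exact absurd rfl hne
        | cons a t =>
          have ha : a = ν := le_antisymm (by simpa using hh) (hlo a (by simp))
          cases t with
          | nil => simp [ha]
          | cons c t' =>
            have hcν : c = ν := by
              have h1 := hc.1
              rw [if_neg (by simp)] at h1
              have := hlo c (by simp)
              omega
            cases t' with
            | nil => simp [ha, hcν]
            | cons e t'' =>
              exfalso
              have h2 : e < c := by have := hc.2.1; split at this <;> simp_all
              have := hlo e (by simp)
              omega
  | succ d ih =>
    have key1 : ∀ l, l ∈ (PQ ν (d+1)).1 ↔ goodC true ν (ν + (d+1)) l := by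
      intro l
      show l ∈ (PQ ν d).1 ∪ insert [ν+d+1] ((PQ ν d).2.image ((ν+d+1) :: ·)) ↔ _
      simp only [Finset.mem_union, Finset.mem_insert, Finset.mem_image]
      rw [ih.1 l]
      constructor
      · rintro (h | rfl | ⟨t, ht, rfl⟩)
        · exact ⟨h.1, h.2.1.trans (by omega), h.2.2.1, h.2.2.2⟩
        · exact ⟨by simp, by simp, by simp; omega, by simp [altChain]⟩
        · rw [ih.2 t] at ht
          obtain ⟨htne, hth, htlo, htc⟩ := ht
          refine ⟨by simp, by simp, ?_, ?_⟩
          · intro x hx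
            rcases List.mem_cons.1 hx with rfl | hx
            · omega
            · exact htlo x hx
          · cases t with
            | nil => exact absurd rfl htne
            | cons c t' =>
              refine ⟨?_, htc⟩
              simp only [List.headI] at hth
              show c < ν + d + 1
              omega
      · rintro ⟨hne, hh, hlo, hc⟩
        by_cases hsm : l.headI ≤ ν + d
        · exact Or.inl ⟨hne, hsm, hlo, hc⟩
        · cases l with
          | nil => exact absurd rfl hne
          | cons a t =>
            have ha : a = ν + d + 1 := by
              simp only [List.headI] at hsm hh
              omega
            subst ha
            cases t with
            | nil => exact Or.inr (Or.inl rfl)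
            | cons c t' =>
              refine Or.inr (Or.inr ⟨c :: t', ?_, rfl⟩)
              rw [ih.2]
              have h1 : c < ν + d + 1 := by
                have := hc.1; split at this <;> simp_all
              refine ⟨by simp, by simp only [List.headI]; omega,
                fun x hx => hlo x (by simp [hx]), hc.2⟩
    have key2 : ∀ l, l ∈ (PQ ν (d+1)).2 ↔ goodC false ν (ν + (d+1)) l := by
      intro l
      show l ∈ (PQ ν d).2 ∪ insert [ν+d+1] (((PQ ν (d+1)).1).image ((ν+d+1) :: ·)) ↔ _
      simp only [Finset.mem_union, Finset.mem_insert, Finset.mem_image]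
      constructor
      · rintro (h | rfl | ⟨t, ht, rfl⟩)
        · rw [ih.2 l] at h
          exact ⟨h.1, h.2.1.trans (by omega), h.2.2.1, h.2.2.2⟩
        · exact ⟨by simp, by simp only [List.headI]; omega, by intro x hx; simp at hx; omega, by simp [altChain]⟩
        · rw [key1 t] at ht
          obtain ⟨htne, hth, htlo, htc⟩ := ht
          refine ⟨by simp, by simp only [List.headI]; omega, ?_, ?_⟩
          · intro x hx
            rcases List.mem_cons.1 hx with rfl | hx
            · omega
            · exact htlo x hx
          · cases t with
            | nil => exact absurd rfl htne
            | cons c t' =>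
              refine ⟨?_, htc⟩
              simp only [List.headI] at hth
              show c ≤ ν + d + 1
              omega
      · rintro ⟨hne, hh, hlo, hc⟩
        by_cases hsm : l.headI ≤ ν + d
        · exact Or.inl ((ih.2 l).2 ⟨hne, hsm, hlo, hc⟩)
        · cases l with
          | nil => exact absurd rfl hne
          | cons a t =>
            have ha : a = ν + d + 1 := by
              simp only [List.headI] at hsm hh
              omega
            subst ha
            cases t with
            | nil => exact Or.inr (Or.inl rfl)
            | cons c t' =>
              refine Or.inr (Or.inr ⟨c :: t', ?_, rfl⟩)
              rw [key1]
              have h1 : c ≤ ν + d + 1 := by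
                have : c ≤ ν + d + 1 := by simpa using hc.1
                exact this
              refine ⟨by simp, by simp only [List.headI]; omega,
                fun x hx => hlo x (by simp [hx]), hc.2⟩
    exact ⟨key1, key2⟩

lemma cons_inj_nat (k : ℕ) : Function.Injective (fun t : List ℕ => k :: t) := by
  intro a b h
  simpa using h

lemma PQ_card (ν : ℕ) : ∀ d, (PQ ν d).1.card = Nat.fib (2*d+3) - 1 ∧
    (PQ ν d).2.card = Nat.fib (2*d+4) - 1 := by
  intro d
  induction d with
  | zero =>
    constructor
    · simp only [PQ, Finset.card_singleton]
      decide
    · rw [show (PQ ν 0).2 = {[ν], [ν, ν]} from rfl]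
      rw [Finset.card_insert_of_notMem (by simp), Finset.card_singleton]
      simp [Nat.fib]
  | succ d ih =>
    set k := ν + d + 1 with hk
    have hdisj : ∀ (s : Finset (List ℕ)), (∀ l ∈ s, l.headI ≤ ν + d) →
        ∀ (s' : Finset (List ℕ)), (∀ l ∈ s', l ≠ []) →
        (s ∪ insert [k] (s'.image (k :: ·))).card = s.card + 1 + s'.card := by
      intro s hs s' hs'
      rw [Finset.card_union_of_disjoint, Finset.card_insert_of_notMem,
        Finset.card_image_of_injective _ (cons_inj_nat k)]
      · omega
      · intro hmem
        obtain ⟨t, htm, ht⟩ := Finset.mem_image.1 hmem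
        exact hs' t htm (by simpa using ht.symm)
      · rw [Finset.disjoint_left]
        intro a ha hmem
        have h1 : a.headI ≤ ν + d := hs a ha
        rcases Finset.mem_insert.1 hmem with rfl | hmem
        · simp only [List.headI] at h1; omega
        · obtain ⟨t, _, rfl⟩ := Finset.mem_image.1 hmem
          simp only [List.headI] at h1; omega
    have hp : ∀ l ∈ (PQ ν d).1, l.headI ≤ ν + d := by
      intro l hl; exact (((PQ_mem ν d).1 l).1 hl).2.1
    have hq : ∀ l ∈ (PQ ν d).2, l.headI ≤ ν + d := by
      intro l hl; exact (((PQ_mem ν d).2 l).1 hl).2.1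
    have e1 : (PQ ν (d+1)).1 = (PQ ν d).1 ∪ insert [k] ((PQ ν d).2.image (k :: ·)) := rfl
    have e2 : (PQ ν (d+1)).2 = (PQ ν d).2 ∪ insert [k] ((PQ ν (d+1)).1.image (k :: ·)) := rfl
    have hqne : ∀ l ∈ (PQ ν d).2, l ≠ [] := by
      intro l hl; exact (((PQ_mem ν d).2 l).1 hl).1
    have hpne' : ∀ l ∈ (PQ ν (d+1)).1, l ≠ [] := by
      intro l hl; exact (((PQ_mem ν (d+1)).1 l).1 hl).1
    have c1 : (PQ ν (d+1)).1.card = Nat.fib (2*(d+1)+3) - 1 := by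
      rw [e1, hdisj _ hp _ hqne,
        show 2*(d+1)+3 = (2*d+3)+2 from by ring, Nat.fib_add_two,
        show 2*d+3+1 = 2*d+4 from by ring]
      have f1 := Nat.fib_pos.2 (show 0 < 2*d+3 by omega)
      have f2 := Nat.fib_pos.2 (show 0 < 2*d+4 by omega)
      omega
    refine ⟨c1, ?_⟩
    rw [e2, hdisj _ hq _ hpne', c1]
    have hadd : Nat.fib ((2*d+4)+2) = Nat.fib (2*d+4) + Nat.fib (2*d+4+1) := Nat.fib_add_two
    have hidx : Nat.fib (2*(d+1)+4) = Nat.fib ((2*d+4)+2) := by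
      rw [show 2*(d+1)+4 = (2*d+4)+2 from by ring]
    have hidx2 : Nat.fib (2*d+4+1) = Nat.fib (2*(d+1)+3) := by
      rw [show 2*d+4+1 = 2*(d+1)+3 from by ring]
    have f1 := Nat.fib_pos.2 (show 0 < 2*d+4 by omega)
    have f2 := Nat.fib_pos.2 (show 0 < 2*(d+1)+3 by omega)
    omega


lemma card_insert_cons (μ : ℕ) (s : Finset (List ℕ)) (hs : ∀ l ∈ s, l ≠ []) :
    (insert [μ] (s.image (μ :: ·))).card = s.card + 1 := by
  rw [Finset.card_insert_of_notMem, Finset.card_image_of_injective _ (cons_inj_nat μ)]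
  intro hmem
  obtain ⟨t, htm, ht⟩ := Finset.mem_image.1 hmem
  exact hs t htm (by simpa using ht.symm)

lemma Fset_one_eq (ν μ : ℕ) (hνμ : ν ≤ μ) :
    Fset 1 ν μ = ↑(insert [μ] (((PQ ν (μ - ν)).1).image (μ :: ·))) := by
  have hμ : μ = ν + (μ - ν) := by omega
  ext l
  simp only [Finset.coe_insert, Set.mem_insert_iff, Finset.coe_image, Set.mem_image,
    Finset.mem_coe]
  constructor
  · rintro ⟨hne, hh, hmem, hc⟩
    cases l with
    | nil => exact absurd rfl hne
    | cons a t =>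
      have ha : μ = a := by simpa using hh.symm
      subst ha
      rw [chainCond_one_cons, idxCond_iff_altChain] at hc
      cases t with
      | nil => exact Or.inl rfl
      | cons c t' =>
        refine Or.inr ⟨c :: t', ?_, rfl⟩
        rw [(PQ_mem ν (μ - ν)).1]
        refine ⟨by simp, ?_, fun x hx => (hmem x (by simp [hx])).1, hc⟩
        simp only [List.headI]
        have := (hmem c (by simp)).2
        omega
  · rintro (rfl | ⟨t, ht, rfl⟩)
    · refine ⟨by simp, by simp, by simp; omega, ?_⟩
      rw [chainCond_one_cons, idxCond_iff_altChain]
      simp [altChain]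
    · rw [(PQ_mem ν (μ - ν)).1] at ht
      obtain ⟨htne, hth, htlo, htc⟩ := ht
      refine ⟨by simp, by simp, ?_, ?_⟩
      · intro x hx
        rcases List.mem_cons.1 hx with rfl | hx
        · omega
        · exact ⟨htlo x hx, (altChain_le true t htc x hx).trans (by omega)⟩
      · rw [chainCond_one_cons, idxCond_iff_altChain]
        exact htc

lemma Fset_two_eq_zero (ν : ℕ) : Fset 2 ν ν = {[ν]} := by
  ext l
  simp only [Set.mem_singleton_iff]
  constructor
  · rintro ⟨hne, hh, hmem, hc⟩
    cases l with
    | nil => exact absurd rfl hne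
    | cons a t =>
      have ha : ν = a := by simpa using hh.symm
      subst ha
      rw [chainCond_two, idxCond_iff_altChain] at hc
      cases t with
      | nil => rfl
      | cons c t' =>
        exfalso
        have h1 : c < ν := by simpa using hc.1
        have := (hmem c (by simp)).1
        omega
  · rintro rfl
    refine ⟨by simp, by simp, by simp, ?_⟩
    rw [chainCond_two, idxCond_iff_altChain]
    simp [altChain]

lemma Fset_two_eq_succ (ν μ e : ℕ) (hμ : μ = ν + e + 1) :
    Fset 2 ν μ = ↑(insert [μ] (((PQ ν e).2).image (μ :: ·))) := by
  ext l
  simp only [Finset.coe_insert, Set.mem_insert_iff, Finset.coe_image, Set.mem_image,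
    Finset.mem_coe]
  constructor
  · rintro ⟨hne, hh, hmem, hc⟩
    cases l with
    | nil => exact absurd rfl hne
    | cons a t =>
      have ha : μ = a := by simpa using hh.symm
      subst ha
      rw [chainCond_two, idxCond_iff_altChain] at hc
      cases t with
      | nil => exact Or.inl rfl
      | cons c t' =>
        refine Or.inr ⟨c :: t', ?_, rfl⟩
        rw [(PQ_mem ν e).2]
        have h1 : c < μ := by simpa using hc.1
        refine ⟨by simp, ?_, fun x hx => (hmem x (by simp [hx])).1, hc.2⟩
        simp only [List.headI]
        omega
  · rintro (rfl | ⟨t, ht, rfl⟩)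
    · refine ⟨by simp, by simp, by simp; omega, ?_⟩
      rw [chainCond_two, idxCond_iff_altChain]
      simp [altChain]
    · rw [(PQ_mem ν e).2] at ht
      obtain ⟨htne, hth, htlo, htc⟩ := ht
      refine ⟨by simp, by simp, ?_, ?_⟩
      · intro x hx
        rcases List.mem_cons.1 hx with rfl | hx
        · omega
        · exact ⟨htlo x hx, (altChain_le false t htc x hx).trans (by omega)⟩
      · rw [chainCond_two, idxCond_iff_altChain]
        cases t with
        | nil => exact absurd rfl htne
        | cons c t' =>
          refine ⟨?_, htc⟩
          simp only [List.headI] at hth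
          show c < μ
          omega

/-- `F_1^{(ν,μ)}` and `F_2^{(ν,μ)}` are finite, with Fibonacci cardinalities
`Fib(2(μ-ν)+3)` and `Fib(2(μ-ν)+2)` respectively. -/
theorem stmt13 (ν μ : ℕ) (hν : 1 ≤ ν) (hνμ : ν ≤ μ) :
    (Fset 1 ν μ).Finite ∧ (Fset 2 ν μ).Finite ∧
    (Fset 1 ν μ).ncard = Nat.fib (2*(μ - ν) + 3) ∧
    (Fset 2 ν μ).ncard = Nat.fib (2*(μ - ν) + 2) := by
  set d := μ - ν with hd
  have hpne : ∀ l ∈ (PQ ν d).1, l ≠ [] := fun l hl => (((PQ_mem ν d).1 l).1 hl).1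
  have h1eq := Fset_one_eq ν μ hνμ
  have hfin1 : (Fset 1 ν μ).Finite := by rw [h1eq]; exact Finset.finite_toSet _
  have hcard1 : (Fset 1 ν μ).ncard = Nat.fib (2*d + 3) := by
    rw [h1eq, Set.ncard_coe_finset, card_insert_cons _ _ hpne, (PQ_card ν d).1]
    have := Nat.fib_pos.2 (show 0 < 2*d+3 by omega)
    omega
  refine ⟨hfin1, ?_, hcard1, ?_⟩ <;> rcases Nat.eq_zero_or_pos d with hd0 | hd0
  · have : μ = ν := by omega
    subst this
    rw [Fset_two_eq_zero]
    exact Set.finite_singleton _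
  · obtain ⟨e, he⟩ : ∃ e, d = e + 1 := ⟨d - 1, by omega⟩
    rw [Fset_two_eq_succ ν μ e (by omega)]
    exact Finset.finite_toSet _
  · have : μ = ν := by omega
    subst this
    rw [Fset_two_eq_zero, Set.ncard_singleton, hd0]
    simp
  · obtain ⟨e, he⟩ : ∃ e, d = e + 1 := ⟨d - 1, by omega⟩
    have hqne : ∀ l ∈ (PQ ν e).2, l ≠ [] := fun l hl => (((PQ_mem ν e).2 l).1 hl).1
    rw [Fset_two_eq_succ ν μ e (by omega), Set.ncard_coe_finset,
      card_insert_cons _ _ hqne, (PQ_card ν e).2, he,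
      show 2*(e+1)+2 = 2*e+4 from by ring]
    have := Nat.fib_pos.2 (show 0 < 2*e+4 by omega)
    omega
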